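/- Let X be a path-connected metric space all of whose open balls are path-connected, let Y be a metric space, and let f : X → Y be a nonconstant continuous function, with β > 0 such that f⁻¹(S[f(x),ε]) is nonempty for all x ∈ X and 0 < ε < β. Then f is not uniformly continuous on X if and only if there exists ε₀ with 0 < ε₀ < β such that inf_{x ∈ X} δ(x,ε₀) = 0, where δ(x,ε₀) := dist(x, f⁻¹(S[f(x),ε₀])). -/

import Mathlib

/-- Let `X` be a path-connected metric space all of whose open balls are
path-connected and `f : X → Y` nonconstant continuous, with `β > 0` such that the
preimage of each sphere `S[f x, ε]`, `0 < ε < β`, is nonempty. Then `f` is not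
uniformly continuous on `X` iff there is `0 < ε₀ < β` with
`inf_{x ∈ X} δ(x, ε₀) = 0`. -/
theorem not_uniformly_continuous_iff_inf_delta_zero {X Y : Type*}
    [MetricSpace X] [MetricSpace Y] [PathConnectedSpace X]
    (hballs : ∀ (q : X) (r : ℝ), 0 < r → IsPathConnected (Metric.ball q r))
    (f : X → Y) (hf : Continuous f) (hnc : ∃ a b : X, f a ≠ f b)
    (β : ℝ) (hβ : 0 < β)
    (hne : ∀ (x : X) (ε : ℝ), 0 < ε → ε < β →
      (f ⁻¹' Metric.sphere (f x) ε).Nonempty) :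
    (¬ ∀ ε : ℝ, 0 < ε → ∃ δ : ℝ, 0 < δ ∧
        ∀ x y : X, dist x y < δ → dist (f x) (f y) < ε) ↔
    (∃ ε₀ : ℝ, 0 < ε₀ ∧ ε₀ < β ∧
      (⨅ x : X, Metric.infDist x (f ⁻¹' Metric.sphere (f x) ε₀)) = 0) := by
  obtain ⟨a, b, hab⟩ := hnc
  haveI : Nonempty X := ⟨a⟩
  constructor
  · intro hUC
    push_neg at hUC
    obtain ⟨ε, hε, hbad⟩ := hUC
    refine ⟨min ε (β / 2), lt_min hε (by linarith), (min_le_right _ _).trans_lt (by linarith), ?_⟩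
    set ε₀ := min ε (β / 2) with hε₀
    have hε₀pos : 0 < ε₀ := lt_min hε (by linarith)
    have hbdd : BddBelow (Set.range fun x : X =>
        Metric.infDist x (f ⁻¹' Metric.sphere (f x) ε₀)) := by
      refine ⟨0, ?_⟩
      rintro _ ⟨x, rfl⟩
      exact Metric.infDist_nonneg
    refine le_antisymm ?_ (le_ciInf fun x => Metric.infDist_nonneg)
    refine le_of_forall_gt_imp_ge_of_dense fun δ hδ0 => ?_
    obtain ⟨x, y, hxy, hfxy⟩ := hbad δ hδ0
    -- path from x to y inside ball x δ
    have hx : x ∈ Metric.ball x δ := Metric.mem_ball_self hδ0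
    have hy : y ∈ Metric.ball x δ := by rw [Metric.mem_ball, dist_comm]; exact hxy
    obtain ⟨γ, hγ⟩ := (hballs x δ hδ0).joinedIn x hx y hy
    set g : ℝ → ℝ := fun t => dist (f x) (f (γ.extend t)) with hg
    have hgc : Continuous g := continuous_const.dist (hf.comp γ.continuous_extend)
    have hg0 : g 0 = 0 := by simp [hg]
    have hg1 : g 1 = dist (f x) (f y) := by simp [hg]
    have hmem : ε₀ ∈ Set.Icc (g 0) (g 1) := by
      constructor
      · rw [hg0]; exact hε₀pos.le
      · rw [hg1]; exact (min_le_left _ _).trans hfxy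
    obtain ⟨t, ht, hgt⟩ := intermediate_value_Icc zero_le_one hgc.continuousOn hmem
    set z := γ.extend t with hz
    have hzmem : z ∈ f ⁻¹' Metric.sphere (f x) ε₀ := by
      rw [Set.mem_preimage, Metric.mem_sphere, dist_comm]
      exact hgt
    have hzball : z ∈ Metric.ball x δ := by
      rw [hz, Path.extend_apply γ ht]
      exact hγ _
    calc (⨅ x : X, Metric.infDist x (f ⁻¹' Metric.sphere (f x) ε₀))
        ≤ Metric.infDist x (f ⁻¹' Metric.sphere (f x) ε₀) := ciInf_le hbdd x
      _ ≤ dist x z := Metric.infDist_le_dist_of_mem hzmem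
      _ ≤ δ := (Metric.mem_ball'.mp hzball).le
  · rintro ⟨ε₀, hε₀, hε₀β, hinf⟩ hUC
    obtain ⟨δ, hδ, hδspec⟩ := hUC ε₀ hε₀
    have hle : δ ≤ ⨅ x : X, Metric.infDist x (f ⁻¹' Metric.sphere (f x) ε₀) := by
      refine le_ciInf fun x => ?_
      by_contra h
      push_neg at h
      obtain ⟨z, hz, hdz⟩ := (Metric.infDist_lt_iff (hne x ε₀ hε₀ hε₀β)).mp h
      have := hδspec x z hdz
      rw [Set.mem_preimage, Metric.mem_sphere] at hz
      rw [dist_comm (f x) (f z)] at this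
      linarith [hz ▸ this]
    rw [hinf] at hle
    linarith
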